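/- Let κ be a regular uncountable cardinal, ⟨λ_i : i < κ⟩ an increasing continuous sequence of cardinals with λ_i > κ for all i, λ = sup_{i<κ} λ_i, let D be the club filter on κ, and let γ(*) = rk_D(⟨λ_i⁺ : i < κ⟩). Then cf(γ(*)) > λ; in particular the interval (λ, γ(*)] contains a regular cardinal. -/

import Mathlib

/-- `f <_D g` iff `{y | f y < g y} ∈ D`. -/
def ltD {Y : Type 1} (D : Filter Y) (f g : Y → Ordinal.{0}) : Prop :=
  {y | f y < g y} ∈ D

/-- The rank `rk_D f` of `f : Y → Ord` with respect to the (well-founded, for countably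
complete `D`) relation `<_D`. -/
noncomputable def rkD {Y : Type 1} (D : Filter Y) (f : Y → Ordinal.{0}) : Ordinal.{1} :=
  haveI := Classical.dec
  if h : Acc (ltD D) f then h.rank else 0

/-- `C` is a club (closed unbounded set) in the ordinal `k`. -/
def IsClubIn (C : Set Ordinal) (k : Ordinal) : Prop :=
  C ⊆ Set.Iio k ∧ (∀ β < k, ∃ γ ∈ C, β ≤ γ) ∧
    ∀ δ < k, Order.IsSuccLimit δ → (∀ β < δ, ∃ γ ∈ C, β < γ ∧ γ < δ) → δ ∈ C

/-- The club filter on (the set of ordinals below) `k`: the filter generated by the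
closed unbounded subsets of `k`. -/
def clubFilter (k : Ordinal) : Filter ↥(Set.Iio k) :=
  Filter.generate {S : Set ↥(Set.Iio k) |
    ∃ C : Set Ordinal, IsClubIn C k ∧ S = {x : ↥(Set.Iio k) | ↑x ∈ C}}

open Ordinal Set Cardinal Filter

theorem club_Iio {k : Ordinal.{0}} : IsClubIn (Set.Iio k) k :=
  ⟨subset_rfl, fun β hβ => ⟨β, hβ, le_rfl⟩, fun δ hδ _ _ => hδ⟩

theorem isLimit_of_aleph0_lt_cof {k : Ordinal.{0}} (hk : Cardinal.aleph0 < k.cof) :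
    Order.IsSuccLimit k := by
  rcases Ordinal.zero_or_succ_or_isSuccLimit k with rfl | ⟨a, rfl⟩ | h
  · simp at hk
  · rw [Ordinal.cof_succ] at hk
    exact absurd hk Cardinal.one_le_aleph0.not_gt
  · exact h

theorem isClubIn_iInter {k : Ordinal.{0}} (hk : Cardinal.aleph0 < k.cof)
    (C : ℕ → Set Ordinal) (hC : ∀ n, IsClubIn (C n) k) :
    IsClubIn (⋂ n, C n) k := by
  have hklim : Order.IsSuccLimit k := isLimit_of_aleph0_lt_cof hk
  refine ⟨(Set.iInter_subset C 0).trans (hC 0).1, ?_, ?_⟩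
  · -- unboundedness
    intro β hβ
    have hnext : ∀ (n : ℕ) (β' : Ordinal.{0}), β' < k → ∃ γ, γ ∈ C n ∧ β' + 1 ≤ γ := by
      intro n β' hβ'
      obtain ⟨γ, hγ, hle⟩ := (hC n).2.1 (β' + 1) (by rw [Ordinal.add_one_eq_succ]; exact hklim.succ_lt hβ')
      exact ⟨γ, hγ, hle⟩
    choose! nxt hmem hle using hnext
    set seq : ℕ → Ordinal.{0} := fun j => Nat.rec β (fun j ih => nxt j.unpair.1 ih) j with hseq
    have hseq0 : seq 0 = β := rfl
    have hseqS : ∀ j, seq (j + 1) = nxt j.unpair.1 (seq j) := fun j => rfl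
    have hseqlt : ∀ j, seq j < k := by
      intro j; induction j with
      | zero => exact hβ
      | succ j ih => rw [hseqS]; exact (hC _).1 (hmem _ _ ih)
    have hstep : ∀ j, seq j < seq (j + 1) := by
      intro j
      have := hle j.unpair.1 (seq j) (hseqlt j)
      rw [hseqS]
      calc seq j < seq j + 1 := lt_add_one _
        _ ≤ _ := this
    have hsm : StrictMono seq := strictMono_nat_of_lt_succ hstep
    set δ : Ordinal.{0} := ⨆ j, seq j with hδ
    have hseqleδ : ∀ j, seq j ≤ δ := fun j => Ordinal.le_iSup seq j
    have hseqltδ : ∀ j, seq j < δ := fun j => (hstep j).trans_le (hseqleδ (j + 1))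
    have hδk : δ < k := by
      apply Ordinal.iSup_lt_ord _ hseqlt
      rwa [Cardinal.mk_nat]
    have hδlim : Order.IsSuccLimit δ := by
      rw [Ordinal.isSuccLimit_iff, Order.isSuccPrelimit_iff_succ_lt]
      refine ⟨fun h0 => ?_, fun a ha => ?_⟩
      · exact absurd (h0 ▸ hseqltδ 0) (not_lt_of_ge zero_le)
      · rw [Ordinal.lt_iSup_iff] at ha
        obtain ⟨j, hj⟩ := ha
        exact lt_of_le_of_lt (Order.succ_le_of_lt hj) (hseqltδ j)
    have hmemC : ∀ m, δ ∈ C m := by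
      intro m
      apply (hC m).2.2 δ hδk hδlim
      intro β' hβ'
      rw [hδ, Ordinal.lt_iSup_iff] at hβ'
      obtain ⟨j, hj⟩ := hβ'
      set j' := Nat.pair m j with hj'
      refine ⟨seq (j' + 1), ?_, ?_, ?_⟩
      · rw [hseqS, hj', Nat.unpair_pair]
        exact hmem m (seq j') (hseqlt j')
      · exact lt_of_lt_of_le hj ((hsm.monotone (Nat.right_le_pair m j)).trans (hstep j').le)
      · exact hseqltδ (j' + 1)
    exact ⟨δ, Set.mem_iInter.2 hmemC, (hseq0 ▸ hseqleδ 0 : β ≤ δ)⟩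
  · -- closedness
    intro δ hδk hδlim happ
    refine Set.mem_iInter.2 fun n => (hC n).2.2 δ hδk hδlim fun β hβ => ?_
    obtain ⟨γ, hγ, h1, h2⟩ := happ β hβ
    exact ⟨γ, Set.mem_iInter.1 hγ n, h1, h2⟩

theorem IsClubIn.inter {k : Ordinal.{0}} (hk : Cardinal.aleph0 < k.cof)
    {C C' : Set Ordinal} (h : IsClubIn C k) (h' : IsClubIn C' k) :
    IsClubIn (C ∩ C') k := by
  have := isClubIn_iInter hk (fun n => if n = 0 then C else C')
    (fun n => by split <;> assumption)
  convert this using 1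
  ext γ
  simp only [Set.mem_inter_iff, Set.mem_iInter]
  constructor
  · rintro ⟨h1, h2⟩ n; split <;> assumption
  · intro h
    exact ⟨by simpa using h 0, by simpa using h 1⟩

theorem mem_clubFilter_iff {k : Ordinal.{0}} (hk : Cardinal.aleph0 < k.cof)
    {S : Set ↥(Set.Iio k)} :
    S ∈ clubFilter k ↔ ∃ C, IsClubIn C k ∧ ∀ x : ↥(Set.Iio k), ↑x ∈ C → x ∈ S := by
  constructor
  · intro hS
    rw [clubFilter, Filter.mem_generate_iff] at hS
    obtain ⟨t, hts, htf, hsub⟩ := hS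
    suffices h : ∃ C, IsClubIn C k ∧ ∀ x : ↥(Set.Iio k), ↑x ∈ C → x ∈ Set.sInter t by
      obtain ⟨C, hC, hCt⟩ := h
      exact ⟨C, hC, fun x hx => hsub (hCt x hx)⟩
    clear hsub
    revert hts
    refine Set.Finite.induction_on (motive := fun u _ => u ⊆ _ →
      ∃ C, IsClubIn C k ∧ ∀ x : ↥(Set.Iio k), ↑x ∈ C → x ∈ Set.sInter u) _ htf
      (fun _ => ⟨Set.Iio k, club_Iio, fun x _ => Set.mem_sInter.2 (fun u hu => absurd hu (Set.notMem_empty u))⟩) ?_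
    intro a s ha hs ih hts
    obtain ⟨C, hC, hCt⟩ := ih (fun u hu => hts (Set.mem_insert_of_mem a hu))
    obtain ⟨C', hC', rfl⟩ := hts (Set.mem_insert a s)
    refine ⟨C' ∩ C, IsClubIn.inter hk hC' hC, fun x hx => ?_⟩
    rw [Set.sInter_insert]
    exact ⟨hx.1, hCt x hx.2⟩
  · rintro ⟨C, hC, hsub⟩
    exact Filter.mem_of_superset
      (Filter.mem_generate_of_mem ⟨C, hC, rfl⟩) hsub

theorem clubFilter_wf {k : Ordinal.{0}} (hk : Cardinal.aleph0 < k.cof) :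
    WellFounded (ltD (clubFilter k)) := by
  constructor
  intro f
  by_contra hf
  have key : ∀ x : {g : ↥(Set.Iio k) → Ordinal.{0} // ¬ Acc (ltD (clubFilter k)) g},
      ∃ y : {g : ↥(Set.Iio k) → Ordinal.{0} // ¬ Acc (ltD (clubFilter k)) g},
        ltD (clubFilter k) y.1 x.1 := by
    rintro ⟨g, hg⟩
    obtain ⟨b, hb, hr⟩ := exists_not_acc_lt_of_not_acc hg
    exact ⟨⟨b, hb⟩, hr⟩
  choose F hF using key
  set c : ℕ → {g : ↥(Set.Iio k) → Ordinal.{0} // ¬ Acc (ltD (clubFilter k)) g} :=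
    fun n => F^[n] ⟨f, hf⟩ with hc
  have hchain : ∀ n, ltD (clubFilter k) (c (n+1)).1 (c n).1 := by
    intro n
    have : c (n+1) = F (c n) := Function.iterate_succ_apply' F n ⟨f, hf⟩
    rw [this]
    exact hF _
  choose C hCclub hCsub using fun n => (mem_clubFilter_iff hk).1 (hchain n)
  have hInter := isClubIn_iInter hk C hCclub
  have hk0 : (0 : Ordinal) < k := (isLimit_of_aleph0_lt_cof hk).pos
  obtain ⟨γ, hγ, -⟩ := hInter.2.1 0 hk0
  have hγk : γ < k := hInter.1 hγ
  have hdesc : ∀ n, (c (n+1)).1 ⟨γ, hγk⟩ < (c n).1 ⟨γ, hγk⟩ :=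
    fun n => hCsub n ⟨γ, hγk⟩ (Set.mem_iInter.1 hγ n)
  exact RelEmbedding.not_wellFounded
    (RelEmbedding.natGT (fun n => (c n).1 ⟨γ, hγk⟩) hdesc)
    (IsWellFounded.wf : WellFounded ((· < ·) : Ordinal.{0} → Ordinal.{0} → Prop))

section rk
variable {Y : Type 1} {D : Filter Y}

theorem rkD_eq (hwf : WellFounded (ltD D)) (f : Y → Ordinal.{0}) :
    rkD D f = (hwf.apply f).rank := by
  rw [rkD]
  exact dif_pos (hwf.apply f)

theorem rkD_lt (hwf : WellFounded (ltD D)) {g f : Y → Ordinal.{0}} (h : ltD D g f) :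
    rkD D g < rkD D f := by
  rw [rkD_eq hwf, rkD_eq hwf]
  have := Acc.rank_lt_of_rel (hwf.apply f) h
  rwa [Subsingleton.elim ((hwf.apply f).inv h) (hwf.apply g)] at this

theorem rkD_le (hwf : WellFounded (ltD D)) {g h : Y → Ordinal.{0}}
    (hD : {y | g y ≤ h y} ∈ D) : rkD D g ≤ rkD D h := by
  rw [rkD_eq hwf g, rkD_eq hwf h, Acc.rank_eq]
  apply Ordinal.iSup_le
  rintro ⟨b, hb⟩
  have hbh : ltD D b h := Filter.mem_of_superset (Filter.inter_mem hb hD)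
    (fun y hy => Set.mem_setOf.2 (lt_of_lt_of_le hy.1 hy.2))
  apply Order.succ_le_of_lt
  have := Acc.rank_lt_of_rel (hwf.apply h) hbh
  rwa [Subsingleton.elim ((hwf.apply h).inv hbh) ((hwf.apply g).inv hb)] at this

theorem exists_le_rkD (hwf : WellFounded (ltD D)) {f : Y → Ordinal.{0}} {γ : Ordinal.{1}}
    (hγ : γ < rkD D f) : ∃ g, ltD D g f ∧ γ ≤ rkD D g := by
  rw [rkD_eq hwf, Acc.rank_eq, Ordinal.lt_iSup_iff] at hγ
  obtain ⟨⟨b, hb⟩, hlt⟩ := hγ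
  refine ⟨b, hb, ?_⟩
  rw [rkD_eq hwf, Subsingleton.elim (hwf.apply b) ((hwf.apply f).inv hb)]
  exact Order.lt_succ_iff.1 hlt

end rk

/-- let `κ` be a regular uncountable cardinal, `⟨λ_i : i < κ⟩` an
increasing continuous sequence of cardinals with `λ_i > κ`, `λ = sup_{i<κ} λ_i`, `D` the
club filter on `κ`, and `γ(*) = rk_D ⟨λ_i⁺ : i < κ⟩`.  Then `cf(γ(*)) > λ`; in
particular the interval `(λ, γ(*)]` contains a regular cardinal. -/
theorem stmt17 (κ : Cardinal.{0}) (hreg : κ.IsRegular) (hunc : Cardinal.aleph0 < κ)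
    (L : Ordinal → Cardinal.{0})
    (hmono : ∀ i j, i < j → j < κ.ord → L i < L j)
    (hcont : ∀ i < κ.ord, Order.IsSuccLimit i → L i = sSup (L '' Set.Iio i))
    (hgt : ∀ i < κ.ord, κ < L i)
    (lam : Cardinal.{0}) (hlam : lam = sSup (L '' Set.Iio κ.ord))
    (γstar : Ordinal.{1})
    (hγ : γstar = rkD (clubFilter κ.ord)
        (fun i : ↥(Set.Iio κ.ord) => (Order.succ (L ↑i)).ord)) :
    Cardinal.lift.{1, 0} lam < γstar.cof ∧
      ∃ χ : Cardinal.{1}, χ.IsRegular ∧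
        Ordinal.lift.{1, 0} lam.ord < χ.ord ∧ χ.ord ≤ γstar := by
  classical
  have hcof : Cardinal.aleph0 < (κ.ord).cof := by rw [hreg.cof_eq]; exact hunc
  have hwf := clubFilter_wf hcof
  set D := clubFilter κ.ord with hD
  set F : ↥(Set.Iio κ.ord) → Ordinal.{0} := fun x => (Order.succ (L ↑x)).ord with hF
  have hrkF : rkD D F = γstar := hγ.symm
  have hk0 : (0 : Ordinal) < κ.ord := by
    rw [← Cardinal.ord_zero]
    exact Cardinal.ord_lt_ord.2 (lt_of_le_of_lt (Cardinal.zero_le _) hunc)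
  haveI : Small.{0} ↥(L '' Set.Iio κ.ord) :=
    small_of_surjective Set.imageFactorization_surjective
  have hbdd : BddAbove (L '' Set.Iio κ.ord) := Cardinal.bddAbove_of_small (s := _)
  have hmemL : ∀ i, i < κ.ord → L i ≤ lam := fun i hi => by
    rw [hlam]; exact le_csSup hbdd (Set.mem_image_of_mem L (Set.mem_Iio.2 hi))
  have hκlam : κ < lam := lt_of_lt_of_le (hgt 0 hk0) (hmemL 0 hk0)
  have haleph0lam : Cardinal.aleph0 < lam := hunc.trans hκlam
  have hL0 : ∀ x : ↥(Set.Iio κ.ord), Cardinal.aleph0 ≤ L ↑x :=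
    fun x => (hunc.trans (hgt _ x.2)).le
  have hFlim : ∀ x, Order.IsSuccLimit (F x) :=
    fun x => Cardinal.isSuccLimit_ord ((hL0 x).trans (Order.le_succ _))
  have hF0 : ∀ x, (0 : Ordinal) < F x := fun x => (hFlim x).pos
  have main : ¬ (γstar.cof ≤ Cardinal.lift.{1, 0} lam) := by
    intro hcle
    obtain ⟨ι, f, hlsub, hmk⟩ := Ordinal.exists_lsub_cof γstar
    have hmkle : #ι ≤ Cardinal.lift.{1, 0} lam := hmk ▸ hcle
    have hembne : Nonempty (ι ↪ lam.ord.ToType) := by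
      rw [← Cardinal.lift_mk_le']
      rw [Cardinal.lift_uzero, Cardinal.mk_toType, Cardinal.card_ord]
      exact hmkle
    obtain ⟨emb⟩ := hembne
    set ν : ι → Ordinal.{0} := fun a => ((Ordinal.ToType.mk (o := lam.ord)).symm (emb a)).1 with hν
    have hνlt : ∀ a, ν a < lam.ord := fun a => ((Ordinal.ToType.mk (o := lam.ord)).symm (emb a)).2
    have hνinj : Function.Injective ν := by
      intro a b hab
      apply emb.injective
      exact (Ordinal.ToType.mk (o := lam.ord)).symm.injective (Subtype.ext hab)
    have hbelow : ∀ a : ι, ∃ g, ltD D g F ∧ f a ≤ rkD D g := by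
      intro a
      apply exists_le_rkD hwf
      rw [hrkF, ← hlsub]
      exact Ordinal.lt_lsub f a
    choose g' hg'F hg'rk using hbelow
    set G : ι → ↥(Set.Iio κ.ord) → Ordinal.{0} :=
      fun a x => if g' a x < F x then g' a x else 0 with hG
    have hGlt : ∀ a x, G a x < F x := by
      intro a x
      rw [hG]; dsimp only; split
      · assumption
      · exact hF0 x
    have hGrk : ∀ a, f a ≤ rkD D (G a) := by
      intro a
      refine (hg'rk a).trans (rkD_le hwf ?_)
      refine Filter.mem_of_superset (hg'F a) (fun y hy => ?_)
      have hyy : G a y = g' a y := if_pos hy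
      exact Set.mem_setOf.2 (le_of_eq hyy.symm)
    set S : ↥(Set.Iio κ.ord) → Set ι := fun x => {a : ι | ν a < (L ↑x).ord} with hS
    have hsmall : ∀ x, Small.{0} ↥(S x) := by
      intro x
      apply small_of_injective (β := ↥(Set.Iio lam.ord)) (f := fun a => ⟨ν a.1, Set.mem_Iio.2 (hνlt a.1)⟩)
      intro a b hab
      exact Subtype.ext (hνinj (congrArg Subtype.val hab))
    set g : ↥(Set.Iio κ.ord) → Ordinal.{0} := fun x =>
      letI := hsmall x
      ⨆ b : Shrink ↥(S x), G ((equivShrink ↥(S x)).symm b).1 x with hg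
    have hgF : ∀ x, g x < F x := by
      intro x
      letI := hsmall x
      apply Ordinal.iSup_lt_ord ?_ (fun b => hGlt _ x)
      have hcofF : (F x).cof = Order.succ (L ↑x) := (Cardinal.isRegular_succ (hL0 x)).cof_eq
      rw [hcofF]
      refine lt_of_le_of_lt ?_ (Order.lt_succ (L ↑x))
      have hinj : Function.Injective (fun b : Shrink ↥(S x) =>
          Ordinal.ToType.mk (o := (L ↑x).ord)
            ⟨ν ((equivShrink ↥(S x)).symm b).1, Set.mem_Iio.2 (((equivShrink ↥(S x)).symm b).2 : _)⟩) := by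
        intro b1 b2 h12
        have h13 := congrArg Subtype.val ((Ordinal.ToType.mk (o := (L ↑x).ord)).injective h12)
        exact (equivShrink ↥(S x)).symm.injective (Subtype.ext (hνinj h13))
      calc #(Shrink ↥(S x)) ≤ #((L ↑x).ord.ToType) := Cardinal.mk_le_of_injective hinj
        _ = L ↑x := by rw [Cardinal.mk_toType, Cardinal.card_ord]
    have hGg : ∀ (a : ι) (x), a ∈ S x → G a x ≤ g x := by
      intro a x ha
      letI := hsmall x
      have := Ordinal.le_iSup (fun b : Shrink ↥(S x) => G ((equivShrink ↥(S x)).symm b).1 x)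
        (equivShrink ↥(S x) ⟨a, ha⟩)
      simpa using this
    have hrkle : ∀ a, rkD D (G a) ≤ rkD D g := by
      intro a
      apply rkD_le hwf
      have hcard : (ν a).card < lam := Cardinal.lt_ord.1 (hνlt a)
      have hex : ∃ i0, i0 < κ.ord ∧ (ν a).card < L i0 := by
        by_contra hno
        push_neg at hno
        have hle : lam ≤ (ν a).card := by
          rw [hlam]
          apply csSup_le ⟨L 0, Set.mem_image_of_mem L (Set.mem_Iio.2 hk0)⟩
          rintro c ⟨i, hi, rfl⟩
          exact hno i hi
        exact absurd hcard (not_lt.2 hle)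
      obtain ⟨i0, hi0, hνa⟩ := hex
      have hClclub : IsClubIn {β : Ordinal | i0 ≤ β ∧ β < κ.ord} κ.ord := by
        refine ⟨fun β hβ => hβ.2,
          fun β hβ => ⟨max β i0, ⟨le_max_right _ _, max_lt hβ hi0⟩, le_max_left _ _⟩, ?_⟩
        intro δ hδ hδlim happ
        obtain ⟨γ, hγ, -, hγδ⟩ := happ 0 hδlim.pos
        exact ⟨hγ.1.trans hγδ.le, hδ⟩
      rw [hD, mem_clubFilter_iff hcof]
      refine ⟨_, hClclub, fun x hx => ?_⟩
      have hLle : L i0 ≤ L ↑x := by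
        rcases eq_or_lt_of_le (hx.1 : i0 ≤ (↑x : Ordinal)) with h | h
        · rw [h]
        · exact (hmono i0 ↑x h x.2).le
      have haS : a ∈ S x := by
        rw [hS]
        refine Set.mem_setOf.2 ?_
        rw [Cardinal.lt_ord]
        exact lt_of_lt_of_le hνa hLle
      exact Set.mem_setOf.2 (hGg a x haS)
    set g1 : ↥(Set.Iio κ.ord) → Ordinal.{0} := fun x => g x + 1 with hg1
    have h1 : ltD D g g1 := Filter.univ_mem' (fun x => Set.mem_setOf.2 (lt_add_one _))
    have h2 : ltD D g1 F := Filter.univ_mem' (fun x => Set.mem_setOf.2 (by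
      change g x + 1 < F x
      rw [Ordinal.add_one_eq_succ]
      exact (hFlim x).succ_lt (hgF x)))
    have hub : γstar ≤ rkD D g1 := by
      rw [← hlsub]
      apply Ordinal.lsub_le
      intro a
      exact lt_of_le_of_lt ((hGrk a).trans (hrkle a)) (rkD_lt hwf h1)
    have hfin : rkD D g1 < γstar := by
      rw [← hrkF]
      exact rkD_lt hwf h2
    exact absurd (hub.trans_lt hfin) (lt_irrefl _)
  have part1 : Cardinal.lift.{1, 0} lam < γstar.cof := not_le.1 main
  refine ⟨part1, γstar.cof, ?_, ?_, Ordinal.ord_cof_le γstar⟩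
  · apply Cardinal.isRegular_cof
    rcases Ordinal.zero_or_succ_or_isSuccLimit γstar with rfl | ⟨a, rfl⟩ | h
    · rw [Ordinal.cof_zero] at part1
      exact absurd part1 (Cardinal.zero_le _).not_gt
    · rw [Ordinal.cof_succ] at part1
      have h1lam : (1 : Cardinal.{1}) ≤ Cardinal.lift.{1, 0} lam := by
        have := Cardinal.lift_le.2 haleph0lam.le
        rw [Cardinal.lift_aleph0] at this
        exact le_trans Cardinal.one_le_aleph0 this
      exact absurd part1 h1lam.not_gt
    · exact h
  · rw [Cardinal.lift_ord]
    exact Cardinal.ord_lt_ord.2 part1
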